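/- arXiv:2110.10344 — 6 statements merged into one kernel-verified Lean document; each statement's English description precedes it below -/
import Mathlib

section
/- For any function f: [0, ∞) → ℝ with f, f', f'' ∈ L²(0, ∞) and f(0) = f'(0) = 0, and for any ε > 0 and α ≥ 0, we have ∫₀^α |f(z)|²/(z + ε)⁴ dz ≤ (16/9) ∫₀^α |f''(z)|² dz. -/
open MeasureTheory Set
set_option maxHeartbeats 1000000

private lemma aux_ii (g : ℝ → ℝ) (hg : Continuous g) {ε : ℝ} (hε : 0 < ε)
    {α : ℝ} (hα : 0 ≤ α) (n : ℕ) :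
    IntervalIntegrable (fun z => g z / (z + ε) ^ n) volume 0 α := by
  apply ContinuousOn.intervalIntegrable
  apply hg.continuousOn.div (by fun_prop)
  intro z hz
  rw [Set.uIcc_of_le hα] at hz
  have hzpos : 0 < z + ε := by linarith [hz.1]
  exact pow_ne_zero _ hzpos.ne'

/-- Shifted Rellich inequality (Lemma 2). -/
theorem rellich_inequality (f : ℝ → ℝ) (hf : ContDiff ℝ 2 f)
    (hfL2 : IntegrableOn (fun z => (f z) ^ 2) (Ioi (0 : ℝ)))
    (hf'L2 : IntegrableOn (fun z => (deriv f z) ^ 2) (Ioi (0 : ℝ)))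
    (hf''L2 : IntegrableOn (fun z => (deriv (deriv f) z) ^ 2) (Ioi (0 : ℝ)))
    (hf0 : f 0 = 0) (hf'0 : deriv f 0 = 0)
    (ε : ℝ) (hε : 0 < ε) (α : ℝ) (hα : 0 ≤ α) :
    ∫ z in (0 : ℝ)..α, (f z) ^ 2 / (z + ε) ^ 4 ≤
      (16 / 9) * ∫ z in (0 : ℝ)..α, (deriv (deriv f) z) ^ 2 := by
  -- basic regularity
  have hf1 : ContDiff ℝ 1 (deriv f) := by
    have h2 : ContDiff ℝ (1+1) f := by norm_num; exact hf
    exact (contDiff_succ_iff_deriv.mp h2).2.2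
  have hcf : Continuous f := hf.continuous
  have hcf' : Continuous (deriv f) := hf.continuous_deriv (by norm_num)
  have hcf'' : Continuous (deriv (deriv f)) := hf1.continuous_deriv le_rfl
  have hd1 : ∀ z : ℝ, HasDerivAt f (deriv f z) z := fun z =>
    ((hf.differentiable (by norm_num)) z).hasDerivAt
  have hd2 : ∀ z : ℝ, HasDerivAt (deriv f) (deriv (deriv f) z) z := fun z =>
    ((hf1.differentiable (by norm_num)) z).hasDerivAt
  have hεpos : ∀ z ∈ Set.uIcc (0:ℝ) α, 0 < z + ε := by
    intro z hz
    rw [Set.uIcc_of_le hα] at hz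
    linarith [hz.1]
  set A := ∫ z in (0:ℝ)..α, (f z) ^ 2 / (z + ε) ^ 4 with hA
  set B := ∫ z in (0:ℝ)..α, (deriv f z) ^ 2 / (z + ε) ^ 2 with hB
  set C := ∫ z in (0:ℝ)..α, (deriv (deriv f) z) ^ 2 with hC
  -- integrability facts
  have iA : IntervalIntegrable (fun z => (f z) ^ 2 / (z + ε) ^ 4) volume 0 α :=
    aux_ii _ (by fun_prop) hε hα 4
  have iAB : IntervalIntegrable (fun z => f z * deriv f z / (z + ε) ^ 3) volume 0 α :=
    aux_ii _ (by fun_prop) hε hα 3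
  have iB : IntervalIntegrable (fun z => (deriv f z) ^ 2 / (z + ε) ^ 2) volume 0 α :=
    aux_ii _ (by fun_prop) hε hα 2
  have iBC : IntervalIntegrable (fun z => deriv f z * deriv (deriv f) z / (z + ε) ^ 1) volume 0 α :=
    aux_ii _ (by fun_prop) hε hα 1
  have iC : IntervalIntegrable (fun z => (deriv (deriv f) z) ^ 2) volume 0 α :=
    (by fun_prop : Continuous fun z => (deriv (deriv f) z) ^ 2).intervalIntegrable _ _
  -- Step 1: integration by parts for A
  have key1 : ∀ z ∈ Set.uIcc (0:ℝ) α,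
      HasDerivAt (fun z => -((f z) ^ 2 / (3 * (z + ε) ^ 3)))
        ((f z) ^ 2 / (z + ε) ^ 4 - 2/3 * (f z * deriv f z / (z + ε) ^ 3)) z := by
    intro z hz
    have hzpos := hεpos z hz
    have h1 : HasDerivAt (fun z => (f z) ^ 2) (2 * f z ^ 1 * deriv f z) z :=
      (hd1 z).pow 2
    have h2 : HasDerivAt (fun z : ℝ => 3 * (z + ε) ^ 3) (3 * (3 * (z + ε) ^ 2 * 1)) z :=
      (((hasDerivAt_id z).add_const ε).pow 3).const_mul 3
    have h3 := (h1.div h2 (by positivity)).neg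
    refine h3.congr_deriv ?_
    field_simp
    ring
  have IBP1 : ∫ z in (0:ℝ)..α,
      ((f z) ^ 2 / (z + ε) ^ 4 - 2/3 * (f z * deriv f z / (z + ε) ^ 3))
      = -((f α) ^ 2 / (3 * (α + ε) ^ 3)) := by
    rw [intervalIntegral.integral_eq_sub_of_hasDerivAt key1
      (iA.sub (iAB.const_mul (2/3)))]
    simp [hf0]
  have split1 : A - 2/3 * ∫ z in (0:ℝ)..α, f z * deriv f z / (z + ε) ^ 3
      = -((f α) ^ 2 / (3 * (α + ε) ^ 3)) := by
    rw [← IBP1, intervalIntegral.integral_sub iA (iAB.const_mul (2/3)),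
      intervalIntegral.integral_const_mul]
  have mono1 : (∫ z in (0:ℝ)..α, 2/3 * (f z * deriv f z / (z + ε) ^ 3))
      ≤ ∫ z in (0:ℝ)..α,
        (1/2 * ((f z) ^ 2 / (z + ε) ^ 4) + 2/9 * ((deriv f z) ^ 2 / (z + ε) ^ 2)) := by
    apply intervalIntegral.integral_mono_on hα (iAB.const_mul (2/3))
      ((iA.const_mul (1/2)).add (iB.const_mul (2/9)))
    intro z hz
    have hzpos : 0 < z + ε := hεpos z (by rw [Set.uIcc_of_le hα]; exact hz)
    have heq : 1/2 * ((f z) ^ 2 / (z + ε) ^ 4) + 2/9 * ((deriv f z) ^ 2 / (z + ε) ^ 2)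
        - 2/3 * (f z * deriv f z / (z + ε) ^ 3)
        = (f z / (z + ε) ^ 2 - 2/3 * (deriv f z / (z + ε))) ^ 2 / 2 := by
      field_simp
      ring
    nlinarith [sq_nonneg (f z / (z + ε) ^ 2 - 2/3 * (deriv f z / (z + ε)))]
  have hAB : A ≤ 4/9 * B := by
    have e1 : (∫ z in (0:ℝ)..α, 2/3 * (f z * deriv f z / (z + ε) ^ 3))
        = 2/3 * ∫ z in (0:ℝ)..α, f z * deriv f z / (z + ε) ^ 3 :=
      intervalIntegral.integral_const_mul _ _
    have e2 : (∫ z in (0:ℝ)..α,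
        (1/2 * ((f z) ^ 2 / (z + ε) ^ 4) + 2/9 * ((deriv f z) ^ 2 / (z + ε) ^ 2)))
        = 1/2 * A + 2/9 * B := by
      rw [intervalIntegral.integral_add (iA.const_mul (1/2)) (iB.const_mul (2/9)),
        intervalIntegral.integral_const_mul, intervalIntegral.integral_const_mul]
    have hbdry : -((f α) ^ 2 / (3 * (α + ε) ^ 3)) ≤ 0 := by
      have : 0 < α + ε := by linarith
      have : 0 ≤ (f α) ^ 2 / (3 * (α + ε) ^ 3) := by positivity
      linarith
    rw [e1] at mono1
    rw [e2] at mono1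
    linarith
  -- Step 2: integration by parts for B
  have key2 : ∀ z ∈ Set.uIcc (0:ℝ) α,
      HasDerivAt (fun z => -((deriv f z) ^ 2 / (z + ε)))
        ((deriv f z) ^ 2 / (z + ε) ^ 2 - 2 * (deriv f z * deriv (deriv f) z / (z + ε) ^ 1)) z := by
    intro z hz
    have hzpos := hεpos z hz
    have h1 : HasDerivAt (fun z => (deriv f z) ^ 2) (2 * deriv f z ^ 1 * deriv (deriv f) z) z :=
      (hd2 z).pow 2
    have h2 : HasDerivAt (fun z : ℝ => z + ε) 1 z := (hasDerivAt_id z).add_const ε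
    have h3 := (h1.div h2 hzpos.ne').neg
    refine h3.congr_deriv ?_
    field_simp
    ring
  have IBP2 : ∫ z in (0:ℝ)..α,
      ((deriv f z) ^ 2 / (z + ε) ^ 2 - 2 * (deriv f z * deriv (deriv f) z / (z + ε) ^ 1))
      = -((deriv f α) ^ 2 / (α + ε)) := by
    rw [intervalIntegral.integral_eq_sub_of_hasDerivAt key2
      (iB.sub (iBC.const_mul 2))]
    simp [hf'0]
  have split2 : B - 2 * ∫ z in (0:ℝ)..α, deriv f z * deriv (deriv f) z / (z + ε) ^ 1
      = -((deriv f α) ^ 2 / (α + ε)) := by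
    rw [← IBP2, intervalIntegral.integral_sub iB (iBC.const_mul 2),
      intervalIntegral.integral_const_mul]
  have mono2 : (∫ z in (0:ℝ)..α, 2 * (deriv f z * deriv (deriv f) z / (z + ε) ^ 1))
      ≤ ∫ z in (0:ℝ)..α,
        (1/2 * ((deriv f z) ^ 2 / (z + ε) ^ 2) + 2 * ((deriv (deriv f) z) ^ 2)) := by
    apply intervalIntegral.integral_mono_on hα (iBC.const_mul 2)
      ((iB.const_mul (1/2)).add (iC.const_mul 2))
    intro z hz
    have hzpos : 0 < z + ε := hεpos z (by rw [Set.uIcc_of_le hα]; exact hz)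
    have heq : 1/2 * ((deriv f z) ^ 2 / (z + ε) ^ 2) + 2 * ((deriv (deriv f) z) ^ 2)
        - 2 * (deriv f z * deriv (deriv f) z / (z + ε) ^ 1)
        = (deriv f z / (z + ε) - 2 * deriv (deriv f) z) ^ 2 / 2 := by
      field_simp
      ring
    nlinarith [sq_nonneg (deriv f z / (z + ε) - 2 * deriv (deriv f) z)]
  have hBC : B ≤ 4 * C := by
    have e1 : (∫ z in (0:ℝ)..α, 2 * (deriv f z * deriv (deriv f) z / (z + ε) ^ 1))
        = 2 * ∫ z in (0:ℝ)..α, deriv f z * deriv (deriv f) z / (z + ε) ^ 1 :=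
      intervalIntegral.integral_const_mul _ _
    have e2 : (∫ z in (0:ℝ)..α,
        (1/2 * ((deriv f z) ^ 2 / (z + ε) ^ 2) + 2 * ((deriv (deriv f) z) ^ 2)))
        = 1/2 * B + 2 * C := by
      rw [intervalIntegral.integral_add (iB.const_mul (1/2)) (iC.const_mul 2),
        intervalIntegral.integral_const_mul, intervalIntegral.integral_const_mul]
    have hbdry : -((deriv f α) ^ 2 / (α + ε)) ≤ 0 := by
      have h1 : 0 < α + ε := by linarith
      have : 0 ≤ (deriv f α) ^ 2 / (α + ε) := by positivity
      linarith
    rw [e1] at mono2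
    rw [e2] at mono2
    linarith
  linarith
end

section
/- Let a, b, R, σ, δ > 0 and suppose f, g: [0, δ] → ℝ are C¹ (extended by any L² continuation) with f(0) = g(0) = 0 and f', g' ∈ L². If σδ ≤ (1/9)√(2ab/R), then ∫₀^δ [ (2a/R)|f'|² + b|g'|² - (9/2)·σδ/(z+σδ)² · f g ] dz ≥ 0. -/
open MeasureTheory Set

lemma ih1_amgm (A B c F G : ℝ) (hA : 0 ≤ A) (hB : 0 ≤ B) (hc : 0 ≤ c)
    (h : 9 * c ≤ Real.sqrt (A * B)) : 18 * c * (F * G) ≤ A * F ^ 2 + B * G ^ 2 := by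
  have hsA : Real.sqrt A ^ 2 = A := Real.sq_sqrt hA
  have hsB : Real.sqrt B ^ 2 = B := Real.sq_sqrt hB
  have hsAnn : 0 ≤ Real.sqrt A := Real.sqrt_nonneg A
  have hsBnn : 0 ≤ Real.sqrt B := Real.sqrt_nonneg B
  have h9 : 9 * c ≤ Real.sqrt A * Real.sqrt B := by
    rwa [Real.sqrt_mul hA] at h
  rcases le_or_gt 0 (F * G) with hFG | hFG
  · nlinarith [sq_nonneg (Real.sqrt A * F - Real.sqrt B * G),
      mul_nonneg (sub_nonneg.2 h9) hFG]
  · have h1 : 0 ≤ (Real.sqrt A * Real.sqrt B + 9 * c) * (-(F * G)) :=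
      mul_nonneg (by nlinarith) (by linarith)
    nlinarith [sq_nonneg (Real.sqrt A * F + Real.sqrt B * G)]

lemma ih1_pointwise (A B c t F G p q : ℝ) (hA : 0 < A) (hB : 0 < B) (hc : 0 < c)
    (ht : 0 < t) (h : 9 * c ≤ Real.sqrt (A * B)) :
    (A * F * p + B * G * q) / t - (A * F ^ 2 + B * G ^ 2) / (2 * t ^ 2)
      ≤ A * p ^ 2 + B * q ^ 2 - 9 / 2 * c / t ^ 2 * (F * G) := by
  rw [← sub_nonneg]
  have key := ih1_amgm A B c F G hA.le hB.le hc.le h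
  have htne : t ≠ 0 := ht.ne'
  have hE : A * p ^ 2 + B * q ^ 2 - 9 / 2 * c / t ^ 2 * (F * G)
      - ((A * F * p + B * G * q) / t - (A * F ^ 2 + B * G ^ 2) / (2 * t ^ 2))
      = (2 * A * (t * p - F / 2) ^ 2 + 2 * B * (t * q - G / 2) ^ 2
          + ((A * F ^ 2 + B * G ^ 2) - 18 * c * (F * G)) / 2) / (2 * t ^ 2) := by
    field_simp
    ring
  rw [hE]
  apply div_nonneg _ (by positivity)
  have h1 : 0 ≤ 2 * A * (t * p - F / 2) ^ 2 := by positivity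
  have h2 : 0 ≤ 2 * B * (t * q - G / 2) ^ 2 := by positivity
  linarith

/-- Nonnegativity of the IH1 bottom boundary layer functional. -/
theorem ih1_bottom_layer_nonneg (a b R σ δ : ℝ)
    (ha : 0 < a) (hb : 0 < b) (hR : 0 < R) (hσ : 0 < σ) (hδ : 0 < δ)
    (f g : ℝ → ℝ) (hf : ContDiff ℝ 1 f) (hg : ContDiff ℝ 1 g)
    (hf0 : f 0 = 0) (hg0 : g 0 = 0)
    (hf'L2 : IntegrableOn (fun z => (deriv f z) ^ 2) (Ioi (0 : ℝ)))
    (hg'L2 : IntegrableOn (fun z => (deriv g z) ^ 2) (Ioi (0 : ℝ)))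
    (hcond : σ * δ ≤ (1 / 9) * Real.sqrt (2 * a * b / R)) :
    (0 : ℝ) ≤ ∫ z in (0 : ℝ)..δ,
      ((2 * a / R) * (deriv f z) ^ 2 + b * (deriv g z) ^ 2
        - (9 / 2) * (σ * δ) / (z + σ * δ) ^ 2 * (f z * g z)) := by
  set A : ℝ := 2 * a / R with hAdef
  set B : ℝ := b with hBdef
  set c : ℝ := σ * δ with hcdef
  have hA : 0 < A := by positivity
  have hB : 0 < B := hb
  have hc : 0 < c := by positivity
  have hABeq : A * B = 2 * a * b / R := by rw [hAdef, hBdef]; ring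
  have hcond' : 9 * c ≤ Real.sqrt (A * B) := by
    rw [hABeq]; linarith
  -- differentiability / continuity facts
  have hfd : Differentiable ℝ f := hf.differentiable one_ne_zero
  have hgd : Differentiable ℝ g := hg.differentiable one_ne_zero
  have hfc : Continuous f := hfd.continuous
  have hgc : Continuous g := hgd.continuous
  have hf'c : Continuous (deriv f) := hf.continuous_deriv le_rfl
  have hg'c : Continuous (deriv g) := hg.continuous_deriv le_rfl
  -- the auxiliary function W and its derivative W'
  set W : ℝ → ℝ := fun z => (A * f z ^ 2 + B * g z ^ 2) / (2 * (z + c)) with hWdef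
  set W' : ℝ → ℝ := fun z =>
      (A * f z * deriv f z + B * g z * deriv g z) / (z + c)
        - (A * f z ^ 2 + B * g z ^ 2) / (2 * (z + c) ^ 2) with hW'def
  have hzc : ∀ z : ℝ, z ∈ uIcc (0 : ℝ) δ → 0 < z + c := by
    intro z hz
    rw [uIcc_of_le hδ.le] at hz
    have := hz.1
    linarith
  have hderivW : ∀ z ∈ uIcc (0 : ℝ) δ, HasDerivAt W (W' z) z := by
    intro z hz
    have htz : 0 < z + c := hzc z hz
    have hfz : HasDerivAt f (deriv f z) z := (hfd z).hasDerivAt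
    have hgz : HasDerivAt g (deriv g z) z := (hgd z).hasDerivAt
    have hN : HasDerivAt (fun z => A * f z ^ 2 + B * g z ^ 2)
        (A * (2 * f z * deriv f z) + B * (2 * g z * deriv g z)) z := by
      have h1 : HasDerivAt (fun z => f z ^ 2) (2 * f z * deriv f z) z := by
        have := hfz.fun_pow 2
        simpa [pow_one] using this
      have h2 : HasDerivAt (fun z => g z ^ 2) (2 * g z * deriv g z) z := by
        have := hgz.fun_pow 2
        simpa [pow_one] using this
      exact (h1.const_mul A).add (h2.const_mul B)
    have hD : HasDerivAt (fun z : ℝ => 2 * (z + c)) 2 z := by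
      have : HasDerivAt (fun z : ℝ => z + c) 1 z := (hasDerivAt_id z).add_const c
      simpa using this.const_mul 2
    have hdiv : HasDerivAt (fun y : ℝ => (A * f y ^ 2 + B * g y ^ 2) / (2 * (y + c))) _ z :=
      hN.fun_div hD (by positivity)
    convert hdiv using 1
    rw [hW'def]
    field_simp
  have hW'int : IntervalIntegrable W' volume 0 δ := by
    apply ContinuousOn.intervalIntegrable
    apply ContinuousOn.sub
    · apply ContinuousOn.div
      · exact (((continuous_const.mul hfc).mul hf'c).add ((continuous_const.mul hgc).mul hg'c)).continuousOn
      · exact (continuous_id.add continuous_const).continuousOn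
      · intro z hz; exact (hzc z hz).ne'
    · apply ContinuousOn.div
      · exact ((continuous_const.mul (hfc.pow 2)).add (continuous_const.mul (hgc.pow 2))).continuousOn
      · exact (continuous_const.mul ((continuous_id.add continuous_const).pow 2)).continuousOn
      · intro z hz; exact mul_ne_zero two_ne_zero (pow_ne_zero 2 (hzc z hz).ne')
  have hIint : IntervalIntegrable (fun z =>
      A * (deriv f z) ^ 2 + B * (deriv g z) ^ 2
        - (9 / 2) * c / (z + c) ^ 2 * (f z * g z)) volume 0 δ := by
    apply ContinuousOn.intervalIntegrable
    apply ContinuousOn.sub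
    · exact ((continuous_const.mul (hf'c.pow 2)).add (continuous_const.mul (hg'c.pow 2))).continuousOn
    · apply ContinuousOn.mul
      · apply ContinuousOn.div
        · exact continuousOn_const
        · exact ((continuous_id.add continuous_const).pow 2).continuousOn
        · intro z hz; exact pow_ne_zero 2 (hzc z hz).ne'
      · exact (hfc.mul hgc).continuousOn
  have hWint : ∫ z in (0 : ℝ)..δ, W' z = W δ - W 0 :=
    intervalIntegral.integral_eq_sub_of_hasDerivAt hderivW hW'int
  have hW0 : W 0 = 0 := by
    rw [hWdef]; simp [hf0, hg0]
  have hWδ : 0 ≤ W δ := by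
    rw [hWdef]
    apply div_nonneg _ (by positivity)
    positivity
  have hmono : ∫ z in (0 : ℝ)..δ, W' z ≤ ∫ z in (0 : ℝ)..δ,
      (A * (deriv f z) ^ 2 + B * (deriv g z) ^ 2
        - (9 / 2) * c / (z + c) ^ 2 * (f z * g z)) := by
    apply intervalIntegral.integral_mono_on hδ.le hW'int hIint
    intro z hz
    have htz : 0 < z + c := by
      have := hz.1; linarith
    have := ih1_pointwise A B c (z + c) (f z) (g z) (deriv f z) (deriv g z)
      hA hB hc htz hcond'
    rw [hW'def]
    simp only
    linarith [this]
  calc (0 : ℝ) ≤ W δ - W 0 := by rw [hW0]; linarith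
    _ = ∫ z in (0 : ℝ)..δ, W' z := hWint.symm
    _ ≤ _ := hmono
end

section
/- Let a, b, R, σ, δ, k > 0 and suppose w: [0, δ] → ℝ is C² with w(0) = w'(0) = 0, and T ∈ L²(0, δ). If σδ ≤ (1/3)√(ab/R), then ∫₀^δ [ (a/(Rk²))|w''|² + bk²|T|² - (9/2)·σδ/(z+√(σδ))⁴·(z+√(σδ))²·w T ] dz ≥ 0, i.e. ∫₀^δ [ (a/(Rk²))|w''|² + bk²|T|² - (9/2)·σδ/(z+√(σδ))²· w T ] dz ≥ 0. -/
open MeasureTheory Set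

/-- Pointwise algebraic core: sum-of-squares decomposition for the
AM–GM + Rellich argument. -/
lemma ih3_key (α β c u v x t : ℝ) (hα : 0 ≤ α) (hβ : 0 < β)
    (hc : 9 * c ^ 2 ≤ α * β) :
    0 ≤ α * x ^ 2 + β * t ^ 2 - (9 / 2) * c * (u * t)
      + α * ((9 / 8) * u ^ 2 - (3 / 4) * (u * v) + (1 / 2) * v ^ 2 - v * x) := by
  nlinarith [mul_nonneg (mul_nonneg hα hβ.le) (sq_nonneg (3 * u - 2 * v)),
    mul_nonneg (mul_nonneg hα hβ.le) (sq_nonneg (v - 2 * x)),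
    sq_nonneg (4 * β * t - 9 * c * u),
    mul_nonneg (sub_nonneg.2 hc) (sq_nonneg u), hβ.le, sq_nonneg u,
    mul_pos hβ hβ]

private lemma ih3_alg1 (p u v x : ℝ) (hp : p ≠ 0) :
    (-(3 / 8) * (((2 : ℕ) : ℝ) * u ^ (2 - 1) * v) * p ^ 3
        - -(3 / 8) * u ^ 2 * (((3 : ℕ) : ℝ) * p ^ (3 - 1) * 1)) / (p ^ 3) ^ 2
      - ((1 / 2) * (((2 : ℕ) : ℝ) * v ^ (2 - 1) * x) * p - (1 / 2) * v ^ 2 * 1) / p ^ 2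
    = -(3 / 4) * (u * v) / p ^ 3 + (9 / 8) * u ^ 2 / p ^ 4 - v * x / p
        + (1 / 2) * v ^ 2 / p ^ 2 := by
  field_simp
  ring

private lemma ih3_alg2 (p al be c u v x t : ℝ) (hp : p ≠ 0) :
    al * x ^ 2 + be * t ^ 2 - 9 / 2 * c / p ^ 2 * (u * t)
      + al * (-(3 / 4) * (u * v) / p ^ 3 + (9 / 8) * u ^ 2 / p ^ 4 - v * x / p
          + (1 / 2) * v ^ 2 / p ^ 2)
    = al * x ^ 2 + be * t ^ 2 - 9 / 2 * c * (u / p ^ 2 * t)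
      + al * ((9 / 8) * (u / p ^ 2) ^ 2 - (3 / 4) * (u / p ^ 2 * (v / p))
          + (1 / 2) * (v / p) ^ 2 - v / p * x) := by
  field_simp
  ring

set_option maxHeartbeats 1000000 in
/-- Nonnegativity of the IH3 bottom boundary layer functional. -/
theorem ih3_bottom_layer_nonneg (a b R σ δ k : ℝ)
    (ha : 0 < a) (hb : 0 < b) (hR : 0 < R) (hσ : 0 < σ) (hδ : 0 < δ) (hk : 0 < k)
    (w T : ℝ → ℝ) (hw : ContDiff ℝ 2 w)
    (hw0 : w 0 = 0) (hw'0 : deriv w 0 = 0)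
    (hT : IntervalIntegrable T volume 0 δ)
    (hT2 : IntervalIntegrable (fun z => (T z) ^ 2) volume 0 δ)
    (hcond : σ * δ ≤ (1 / 3) * Real.sqrt (a * b / R)) :
    (0 : ℝ) ≤ ∫ z in (0 : ℝ)..δ,
      ((a / (R * k ^ 2)) * (deriv (deriv w) z) ^ 2 + b * k ^ 2 * (T z) ^ 2
        - (9 / 2) * (σ * δ) / (z + Real.sqrt (σ * δ)) ^ 2 * (w z * T z)) := by
  set s : ℝ := Real.sqrt (σ * δ) with hs_def
  have hsδ : 0 < σ * δ := mul_pos hσ hδ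
  have hs : 0 < s := Real.sqrt_pos.2 hsδ
  set α : ℝ := a / (R * k ^ 2) with hα_def
  have hRk : 0 < R * k ^ 2 := by positivity
  have hα : 0 < α := div_pos ha hRk
  have hβ : 0 < b * k ^ 2 := by positivity
  -- derivative facts
  have hw2 : ContDiff ℝ (1 + 1) w := by
    rw [show ((1 : WithTop ℕ∞) + 1) = 2 from by norm_num]; exact hw
  obtain ⟨hwdiff, -, hw'cd⟩ := contDiff_succ_iff_deriv.mp hw2
  obtain ⟨hw'diff, hw''cont⟩ := contDiff_one_iff_deriv.mp hw'cd
  have hwcont : Continuous w := hwdiff.continuous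
  set W : ℝ → ℝ := deriv w with hW_def
  set X : ℝ → ℝ := deriv (deriv w) with hX_def
  have hw'cont : Continuous W := hw'diff.continuous
  -- the key inequality 9 (σδ)² ≤ α · b k²
  have hab : 0 ≤ a * b / R := by positivity
  have hc : 9 * (σ * δ) ^ 2 ≤ α * (b * k ^ 2) := by
    have h1 : (σ * δ) ^ 2 ≤ ((1 / 3) * Real.sqrt (a * b / R)) ^ 2 :=
      pow_le_pow_left₀ hsδ.le hcond 2
    have h2 : ((1 / 3) * Real.sqrt (a * b / R)) ^ 2 = (1 / 9) * (a * b / R) := by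
      rw [mul_pow, Real.sq_sqrt hab]; norm_num
    have h3 : α * (b * k ^ 2) = a * b / R := by
      rw [hα_def]; field_simp
    rw [h3]; nlinarith [h1, h2]
  -- auxiliary function Φ and its derivative
  set Φ : ℝ → ℝ := fun z =>
    -(3 / 8) * w z ^ 2 / (z + s) ^ 3 - (1 / 2) * W z ^ 2 / (z + s) with hΦ_def
  set Φd : ℝ → ℝ := fun z =>
    -(3 / 4) * (w z * W z) / (z + s) ^ 3 + (9 / 8) * w z ^ 2 / (z + s) ^ 4
      - W z * X z / (z + s) + (1 / 2) * W z ^ 2 / (z + s) ^ 2 with hΦd_def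
  have hΦderiv : ∀ z : ℝ, 0 < z + s → HasDerivAt Φ (Φd z) z := by
    intro z hz
    have hzne : (z + s) ≠ 0 := hz.ne'
    have hdw : HasDerivAt w (W z) z := hwdiff.differentiableAt.hasDerivAt
    have hdW : HasDerivAt W (X z) z := hw'diff.differentiableAt.hasDerivAt
    have hdp : HasDerivAt (fun z : ℝ => z + s) 1 z := (hasDerivAt_id z).add_const s
    have hd1 := ((hdw.pow 2).const_mul (-(3 / 8) : ℝ)).div (hdp.pow 3)
      (pow_ne_zero 3 hzne)
    have hd2 := ((hdW.pow 2).const_mul ((1 : ℝ) / 2)).div hdp hzne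
    refine (hd1.sub hd2).congr_deriv ?_
    rw [hΦd_def]
    exact ih3_alg1 (z + s) (w z) (W z) (X z) hzne
  have hpne : ∀ z ∈ Icc (0 : ℝ) δ, (z + s) ≠ 0 := fun z hz => by
    have := hz.1; positivity
  have hΦdcont : ContinuousOn Φd (Icc 0 δ) := by
    rw [hΦd_def]
    refine (((ContinuousOn.div ?_ ?_ ?_).add (ContinuousOn.div ?_ ?_ ?_)).sub
      (ContinuousOn.div ?_ ?_ ?_)).add (ContinuousOn.div ?_ ?_ ?_)
    · fun_prop
    · fun_prop
    · exact fun z hz => pow_ne_zero _ (hpne z hz)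
    · fun_prop
    · fun_prop
    · exact fun z hz => pow_ne_zero _ (hpne z hz)
    · fun_prop
    · fun_prop
    · exact hpne
    · fun_prop
    · fun_prop
    · exact fun z hz => pow_ne_zero _ (hpne z hz)
  have huIcc : uIcc (0 : ℝ) δ = Icc 0 δ := uIcc_of_le hδ.le
  have hΦdint : IntervalIntegrable Φd volume 0 δ := by
    apply ContinuousOn.intervalIntegrable; rw [huIcc]; exact hΦdcont
  have hFTC : ∫ z in (0 : ℝ)..δ, Φd z = Φ δ - Φ 0 := by
    refine intervalIntegral.integral_eq_sub_of_hasDerivAt (fun z hz => ?_) hΦdint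
    rw [huIcc] at hz
    exact hΦderiv z (by have := hz.1; positivity)
  -- the integrand
  set F : ℝ → ℝ := fun z => α * X z ^ 2 + b * k ^ 2 * T z ^ 2
      - 9 / 2 * (σ * δ) / (z + s) ^ 2 * (w z * T z) with hF_def
  have hFint : IntervalIntegrable F volume 0 δ := by
    have h1 : IntervalIntegrable (fun z => α * X z ^ 2) volume 0 δ :=
      Continuous.intervalIntegrable (continuous_const.mul (hw''cont.pow 2)) 0 δ
    have h2 : IntervalIntegrable (fun z => b * k ^ 2 * T z ^ 2) volume 0 δ :=
      hT2.const_mul _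
    have hgcont : ContinuousOn (fun z => 9 / 2 * (σ * δ) / (z + s) ^ 2 * w z)
        (uIcc (0 : ℝ) δ) := by
      rw [huIcc]
      exact (ContinuousOn.div (by fun_prop) (by fun_prop)
        (fun z hz => pow_ne_zero _ (hpne z hz))).mul hwcont.continuousOn
    have h3 := hT.continuousOn_mul hgcont
    have h3' : IntervalIntegrable
        (fun z => 9 / 2 * (σ * δ) / (z + s) ^ 2 * (w z * T z)) volume 0 δ := by
      have : (fun z => 9 / 2 * (σ * δ) / (z + s) ^ 2 * w z * T z)
          = fun z => 9 / 2 * (σ * δ) / (z + s) ^ 2 * (w z * T z) := by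
        funext z; ring
      rwa [this] at h3
    exact (h1.add h2).sub h3'
  -- pointwise nonnegativity of F + α Φd
  have hpt : ∀ z ∈ Icc (0 : ℝ) δ, 0 ≤ F z + α * Φd z := by
    intro z hz
    have hP : 0 < z + s := by have := hz.1; positivity
    have key := ih3_key α (b * k ^ 2) (σ * δ) (w z / (z + s) ^ 2) (W z / (z + s))
      (X z) (T z) hα.le hβ hc
    have hEq : F z + α * Φd z
        = α * X z ^ 2 + b * k ^ 2 * T z ^ 2
          - 9 / 2 * (σ * δ) * (w z / (z + s) ^ 2 * T z)
          + α * ((9 / 8) * (w z / (z + s) ^ 2) ^ 2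
            - (3 / 4) * (w z / (z + s) ^ 2 * (W z / (z + s)))
            + (1 / 2) * (W z / (z + s)) ^ 2 - W z / (z + s) * X z) := by
      rw [hF_def, hΦd_def]
      exact ih3_alg2 (z + s) α (b * k ^ 2) (σ * δ) (w z) (W z) (X z) (T z) hP.ne'
    rw [hEq]; exact key
  have h2 : 0 ≤ ∫ z in (0 : ℝ)..δ, (F z + α * Φd z) :=
    intervalIntegral.integral_nonneg hδ.le hpt
  have h3 : (∫ z in (0 : ℝ)..δ, (F z + α * Φd z))
      = (∫ z in (0 : ℝ)..δ, F z) + α * (Φ δ - Φ 0) := by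
    rw [intervalIntegral.integral_add hFint (hΦdint.const_mul α),
      intervalIntegral.integral_const_mul, hFTC]
  have hΦ0 : Φ 0 = 0 := by
    show -(3 / 8) * w 0 ^ 2 / (0 + s) ^ 3 - (1 / 2) * W 0 ^ 2 / (0 + s) = 0
    rw [hw0, hw'0]
    ring
  have hΦδ : Φ δ ≤ 0 := by
    show -(3 / 8) * w δ ^ 2 / (δ + s) ^ 3 - (1 / 2) * W δ ^ 2 / (δ + s) ≤ 0
    have hδs : 0 < δ + s := by positivity
    have hA : -(3 / 8) * w δ ^ 2 / (δ + s) ^ 3 ≤ 0 :=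
      div_nonpos_of_nonpos_of_nonneg (by nlinarith [sq_nonneg (w δ)]) (by positivity)
    have hB : 0 ≤ (1 / 2) * W δ ^ 2 / (δ + s) := by positivity
    linarith
  have hfin : 0 ≤ ∫ z in (0 : ℝ)..δ, F z := by
    have hαΦ : α * (Φ δ - Φ 0) ≤ 0 := by
      rw [hΦ0, sub_zero]
      exact mul_nonpos_iff.2 (Or.inl ⟨hα.le, hΦδ⟩)
    rw [h3] at h2
    linarith
  calc (0 : ℝ) ≤ ∫ z in (0 : ℝ)..δ, F z := hfin
    _ = _ := by simp only [hF_def]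
end

section
/- Let a, b, R, σ, γ, k > 0 and w: [1-γ, 1] → ℝ be C² with w(1) = w'(1) = 0 and T ∈ L²(1-γ, 1). If (σ + a)γ ≤ 6√(ab/R), then ∫_{1-γ}^1 [ (a/(Rk²))|w''|² + bk²|T|² - ((σ+a)/γ) w T ] dz ≥ 0. -/
open MeasureTheory Set

set_option maxHeartbeats 1000000

/-- Cauchy–Schwarz for interval integrals of continuous functions. -/
lemma cs_intervalIntegral {u v : ℝ} (huv : u ≤ v) {f g : ℝ → ℝ}
    (hf : Continuous f) (hg : Continuous g) :
    (∫ s in u..v, f s * g s) ^ 2 ≤ (∫ s in u..v, f s ^ 2) * (∫ s in u..v, g s ^ 2) := by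
  set A := ∫ s in u..v, f s ^ 2 with hA
  set B := ∫ s in u..v, f s * g s with hB
  set C := ∫ s in u..v, g s ^ 2 with hC
  have key : ∀ x : ℝ, 0 ≤ A * (x * x) + (2 * B) * x + C := by
    intro x
    have h1 : (∫ s in u..v, (x * f s + g s) ^ 2)
        = A * (x * x) + (2 * B) * x + C := by
      have e : (fun s => (x * f s + g s) ^ 2)
          = fun s => (x * x) * f s ^ 2 + (2 * x) * (f s * g s) + g s ^ 2 := by
        funext s; ring
      rw [e, intervalIntegral.integral_add, intervalIntegral.integral_add,
        intervalIntegral.integral_const_mul, intervalIntegral.integral_const_mul]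
      · ring
      · exact (continuous_const.mul (hf.pow 2)).intervalIntegrable _ _
      · exact (continuous_const.mul (hf.mul hg)).intervalIntegrable _ _
      · exact ((continuous_const.mul (hf.pow 2)).add (continuous_const.mul (hf.mul hg))).intervalIntegrable _ _
      · exact ((hg.pow 2)).intervalIntegrable _ _
    rw [← h1]
    exact intervalIntegral.integral_nonneg huv (fun s _ => sq_nonneg _)
  have hd := discrim_le_zero key
  rw [discrim] at hd
  nlinarith [hd]

/-- Nonnegativity of the IH3 top boundary layer functional. -/
theorem ih3_top_layer_nonneg (a b R σ γ k : ℝ)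
    (ha : 0 < a) (hb : 0 < b) (hR : 0 < R) (hσ : 0 < σ) (hγ : 0 < γ) (hk : 0 < k)
    (w T : ℝ → ℝ) (hw : ContDiff ℝ 2 w)
    (hw1 : w 1 = 0) (hw'1 : deriv w 1 = 0)
    (hT : IntervalIntegrable T volume (1 - γ) 1)
    (hT2 : IntervalIntegrable (fun z => (T z) ^ 2) volume (1 - γ) 1)
    (hcond : (σ + a) * γ ≤ 6 * Real.sqrt (a * b / R)) :
    (0 : ℝ) ≤ ∫ z in (1 - γ)..(1 : ℝ),
      ((a / (R * k ^ 2)) * (deriv (deriv w) z) ^ 2 + b * k ^ 2 * (T z) ^ 2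
        - ((σ + a) / γ) * (w z * T z)) := by
  have hle : (1 - γ : ℝ) ≤ 1 := by linarith
  -- regularity
  have hw2 : ContDiff ℝ (1 + 1) w := by exact_mod_cast hw
  have hw' : ContDiff ℝ 1 (deriv w) := (contDiff_succ_iff_deriv.mp hw2).2.2
  have hwd : Differentiable ℝ w := (contDiff_succ_iff_deriv.mp hw2).1
  have hdwd : Differentiable ℝ (deriv w) := hw'.differentiable one_ne_zero
  have hwc : Continuous w := hwd.continuous
  have hdwc : Continuous (deriv w) := hdwd.continuous
  have hgc : Continuous (deriv (deriv w)) := (contDiff_one_iff_deriv.mp hw').2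
  set g := deriv (deriv w) with hgdef
  -- FTC for deriv w
  have hftc : ∀ z : ℝ, (∫ s in z..1, deriv w s) = w 1 - w z := fun z =>
    intervalIntegral.integral_deriv_eq_sub (fun x _ => hwd x)
      (hdwc.intervalIntegrable _ _)
  -- key identity : w z = ∫ s in z..1, (s - z) * g s
  have hkey : ∀ z : ℝ, w z = ∫ s in z..1, (s - z) * g s := by
    intro z
    have hparts := intervalIntegral.integral_mul_deriv_eq_deriv_mul
      (u := fun s => s - z) (v := deriv w) (u' := fun _ => (1 : ℝ)) (v' := g)
      (a := z) (b := 1)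
      (fun x _ => (hasDerivAt_id x).sub_const z)
      (fun x _ => (hdwd x).hasDerivAt)
      (intervalIntegrable_const) (hgc.intervalIntegrable _ _)
    rw [hparts]
    simp only [one_mul, hftc z, hw1, hw'1, sub_self, zero_sub, mul_zero]
    ring
  -- total Dirichlet-type integral
  set I := ∫ s in (1 - γ)..1, g s ^ 2 with hIdef
  have hI : 0 ≤ I := intervalIntegral.integral_nonneg hle (fun s _ => sq_nonneg _)
  -- pointwise bound on w^2
  have hptw : ∀ z ∈ Icc (1 - γ) (1 : ℝ), (w z) ^ 2 ≤ (1 - z) ^ 3 / 3 * I := by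
    intro z hz
    have hz1 : z ≤ 1 := hz.2
    have hcs := cs_intervalIntegral hz1 (f := fun s => s - z) (g := g)
      (continuous_id.sub continuous_const) hgc
    have h1 : (∫ s in z..1, (s - z) ^ 2) = (1 - z) ^ 3 / 3 := by
      rw [show (fun s : ℝ => (s - z) ^ 2) = fun s => (fun u : ℝ => u ^ 2) (s - z) from rfl,
        intervalIntegral.integral_comp_sub_right (fun u : ℝ => u ^ 2) z,
        integral_pow]
      norm_num
    have h2 : (∫ s in z..1, g s ^ 2) ≤ I := by
      apply intervalIntegral.integral_mono_interval hz.1 hz1 le_rfl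
      · exact Filter.Eventually.of_forall (fun s => sq_nonneg _)
      · exact (hgc.pow 2).intervalIntegrable _ _
    calc (w z) ^ 2 = (∫ s in z..1, (s - z) * g s) ^ 2 := by rw [← hkey]
      _ ≤ (∫ s in z..1, (s - z) ^ 2) * (∫ s in z..1, g s ^ 2) := hcs
      _ ≤ (1 - z) ^ 3 / 3 * I := by
          rw [h1]
          have hz0 : (0 : ℝ) ≤ 1 - z := by linarith
          have h4 : (0 : ℝ) ≤ (1 - z) ^ 3 / 3 := by positivity
          exact mul_le_mul_of_nonneg_left h2 h4
  -- integral bound on ∫ w^2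
  have hcube : (∫ z in (1 - γ)..1, (1 - z) ^ 3) = γ ^ 4 / 4 := by
    have e : (fun z : ℝ => (1 - z) ^ 3) = fun z => -((fun u : ℝ => u ^ 3) (z - 1)) := by
      funext z; ring
    rw [e, intervalIntegral.integral_neg,
      intervalIntegral.integral_comp_sub_right (fun u : ℝ => u ^ 3) 1, integral_pow]
    norm_num
    ring
  have hw2b : (∫ z in (1 - γ)..1, (w z) ^ 2) ≤ γ ^ 4 / 12 * I := by
    have hmono : (∫ z in (1 - γ)..1, (w z) ^ 2)
        ≤ ∫ z in (1 - γ)..1, (1 - z) ^ 3 / 3 * I :=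
      intervalIntegral.integral_mono_on hle
        ((hwc.pow 2).intervalIntegrable _ _)
        (((((continuous_const.sub continuous_id).pow 3).div_const 3).mul
          continuous_const).intervalIntegrable _ _) hptw
    have hrhs : (∫ z in (1 - γ)..1, (1 - z) ^ 3 / 3 * I) = γ ^ 4 / 12 * I := by
      have e : (fun z : ℝ => (1 - z) ^ 3 / 3 * I) = fun z => (1 - z) ^ 3 * (I / 3) := by
        funext z; ring
      rw [e, intervalIntegral.integral_mul_const, hcube]
      ring
    linarith [hmono, hrhs.le, hrhs.ge]
  -- AM-GM splitting
  set q := (σ + a) / γ with hqdef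
  have hq : q * γ = σ + a := div_mul_cancel₀ _ (ne_of_gt hγ)
  have hq0 : 0 < q := div_pos (by linarith) hγ
  set J := ∫ z in (1 - γ)..1, (w z) ^ 2 with hJdef
  have hJ0 : 0 ≤ J := intervalIntegral.integral_nonneg hle (fun z _ => sq_nonneg _)
  -- integrability facts
  have hwT : IntervalIntegrable (fun z => w z * T z) volume (1 - γ) 1 :=
    hT.continuousOn_mul hwc.continuousOn
  have hG : IntervalIntegrable
      (fun z => a / (R * k ^ 2) * g z ^ 2 - q ^ 2 / (4 * b * k ^ 2) * (w z) ^ 2)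
      volume (1 - γ) 1 :=
    (((continuous_const.mul (hgc.pow 2)).sub (continuous_const.mul (hwc.pow 2))).intervalIntegrable _ _)
  have hF : IntervalIntegrable
      (fun z => a / (R * k ^ 2) * g z ^ 2 + b * k ^ 2 * (T z) ^ 2 - q * (w z * T z))
      volume (1 - γ) 1 := by
    apply IntervalIntegrable.sub
    · exact ((continuous_const.mul (hgc.pow 2)).intervalIntegrable _ _).add (hT2.const_mul _)
    · exact hwT.const_mul _
  -- pointwise AM-GM
  have hbk : (0 : ℝ) < b * k ^ 2 := by positivity
  have hpt : ∀ z ∈ Icc (1 - γ) (1 : ℝ),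
      a / (R * k ^ 2) * g z ^ 2 - q ^ 2 / (4 * b * k ^ 2) * (w z) ^ 2
        ≤ a / (R * k ^ 2) * g z ^ 2 + b * k ^ 2 * (T z) ^ 2 - q * (w z * T z) := by
    intro z _
    have hid : a / (R * k ^ 2) * g z ^ 2 + b * k ^ 2 * (T z) ^ 2 - q * (w z * T z)
        = (a / (R * k ^ 2) * g z ^ 2 - q ^ 2 / (4 * b * k ^ 2) * (w z) ^ 2)
          + b * k ^ 2 * (T z - q / (2 * b * k ^ 2) * w z) ^ 2 := by
      field_simp
      ring
    rw [hid]
    nlinarith [sq_nonneg (T z - q / (2 * b * k ^ 2) * w z), hbk.le]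
  have hmono2 := intervalIntegral.integral_mono_on hle hG hF hpt
  -- compute the integral of G
  have hGval : (∫ z in (1 - γ)..1,
      (a / (R * k ^ 2) * g z ^ 2 - q ^ 2 / (4 * b * k ^ 2) * (w z) ^ 2))
      = a / (R * k ^ 2) * I - q ^ 2 / (4 * b * k ^ 2) * J := by
    rw [intervalIntegral.integral_sub (f := fun z => a / (R * k ^ 2) * g z ^ 2)
      (g := fun z => q ^ 2 / (4 * b * k ^ 2) * (w z) ^ 2) ((continuous_const.mul (hgc.pow 2)).intervalIntegrable _ _)
      ((continuous_const.mul (hwc.pow 2)).intervalIntegrable _ _),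
      intervalIntegral.integral_const_mul, intervalIntegral.integral_const_mul]
  -- final arithmetic
  have hsq : ((σ + a) * γ) ^ 2 ≤ 36 * (a * b / R) := by
    have h1 : 0 ≤ (σ + a) * γ := by positivity
    have h2 : (6 * Real.sqrt (a * b / R)) ^ 2 = 36 * (a * b / R) := by
      rw [mul_pow, Real.sq_sqrt (by positivity)]; norm_num
    nlinarith [hcond, Real.sqrt_nonneg (a * b / R)]
  have hRab : R * ((σ + a) * γ) ^ 2 ≤ 36 * (a * b) := by
    have := mul_le_mul_of_nonneg_left hsq hR.le
    have hR' : R * (36 * (a * b / R)) = 36 * (a * b) := by field_simp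
    linarith [this, hR'.le, hR'.ge]
  have hcoef : q ^ 2 / (4 * b * k ^ 2) * (γ ^ 4 / 12) ≤ a / (R * k ^ 2) := by
    have hqg2 : q ^ 2 * γ ^ 2 = (σ + a) ^ 2 := by
      have h := congrArg (fun x : ℝ => x ^ 2) hq
      simpa [mul_pow] using h
    rw [div_mul_eq_mul_div, div_le_div_iff₀ (by positivity) (by positivity)]
    have e1 : q ^ 2 * (γ ^ 4 / 12) * (R * k ^ 2)
        = R * ((σ + a) * γ) ^ 2 * (k ^ 2 / 12) := by
      linear_combination (γ ^ 2 * R * k ^ 2 / 12) * hqg2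
    rw [e1]
    have key := mul_le_mul_of_nonneg_right hRab (by positivity : (0:ℝ) ≤ k ^ 2 / 12)
    nlinarith [key, mul_pos (mul_pos ha hb) (pow_pos hk 2)]
  have hfin : 0 ≤ a / (R * k ^ 2) * I - q ^ 2 / (4 * b * k ^ 2) * J := by
    have hB : (0 : ℝ) ≤ q ^ 2 / (4 * b * k ^ 2) := by positivity
    have h1 : q ^ 2 / (4 * b * k ^ 2) * J ≤ q ^ 2 / (4 * b * k ^ 2) * (γ ^ 4 / 12 * I) :=
      mul_le_mul_of_nonneg_left hw2b hB
    have h2 : q ^ 2 / (4 * b * k ^ 2) * (γ ^ 4 / 12 * I) ≤ a / (R * k ^ 2) * I := by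
      have := mul_le_mul_of_nonneg_right hcoef hI
      calc q ^ 2 / (4 * b * k ^ 2) * (γ ^ 4 / 12 * I)
          = q ^ 2 / (4 * b * k ^ 2) * (γ ^ 4 / 12) * I := by ring
        _ ≤ a / (R * k ^ 2) * I := this
    linarith
  calc (0 : ℝ) ≤ a / (R * k ^ 2) * I - q ^ 2 / (4 * b * k ^ 2) * J := hfin
    _ = ∫ z in (1 - γ)..1,
        (a / (R * k ^ 2) * g z ^ 2 - q ^ 2 / (4 * b * k ^ 2) * (w z) ^ 2) := hGval.symm
    _ ≤ ∫ z in (1 - γ)..1,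
        (a / (R * k ^ 2) * g z ^ 2 + b * k ^ 2 * (T z) ^ 2 - q * (w z * T z)) := hmono2
end

section
/- For R ≥ 2^(21/2)·3^(-7/2), the parameters a = σ = exp(-2^(8/5)·3^(8/5)·R^(3/5)), b = 2^(7/5)·3^(6/5)·R^(1/5)·exp(-2^(8/5)·3^(8/5)·R^(3/5)), δ = γ = 2^(6/5)·3^(-7/5)·R^(-2/5) satisfy all of: a, b, σ, δ, γ ≤ 1; 8aδ ≤ σ; γ(σ+a) ≤ 4√(2ab/R); σδ ≤ (1/9)√(2ab/R); b/6 ≤ -(1/4)σδ log σ; and 2(σ+a)²/(bγ) ≤ -(1/4)σδ log σ. -/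
private lemma rpow_div_five (x : ℝ) (hx : 0 ≤ x) (n : ℕ) :
    x ^ ((n : ℝ) / 5) = (x ^ ((1 : ℝ) / 5)) ^ n := by
  rw [← Real.rpow_natCast (x ^ ((1 : ℝ) / 5)) n, ← Real.rpow_mul hx]
  congr 1
  ring

set_option maxHeartbeats 1000000 in
/-- The IH1 parameter choices satisfy all the constraints of the proof. -/
theorem ih1_parameter_choices (R a b σ δ γ : ℝ)
    (hR : (2 : ℝ) ^ ((21 : ℝ) / 2) * (3 : ℝ) ^ (-(7 : ℝ) / 2) ≤ R)
    (ha : a = Real.exp (-((2 : ℝ) ^ ((8 : ℝ) / 5) * (3 : ℝ) ^ ((8 : ℝ) / 5) * R ^ ((3 : ℝ) / 5))))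
    (hσ : σ = Real.exp (-((2 : ℝ) ^ ((8 : ℝ) / 5) * (3 : ℝ) ^ ((8 : ℝ) / 5) * R ^ ((3 : ℝ) / 5))))
    (hb : b = (2 : ℝ) ^ ((7 : ℝ) / 5) * (3 : ℝ) ^ ((6 : ℝ) / 5) * R ^ ((1 : ℝ) / 5) *
      Real.exp (-((2 : ℝ) ^ ((8 : ℝ) / 5) * (3 : ℝ) ^ ((8 : ℝ) / 5) * R ^ ((3 : ℝ) / 5))))
    (hδ : δ = (2 : ℝ) ^ ((6 : ℝ) / 5) * (3 : ℝ) ^ (-(7 : ℝ) / 5) * R ^ (-(2 : ℝ) / 5))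
    (hγ : γ = (2 : ℝ) ^ ((6 : ℝ) / 5) * (3 : ℝ) ^ (-(7 : ℝ) / 5) * R ^ (-(2 : ℝ) / 5)) :
    a ≤ 1 ∧ b ≤ 1 ∧ σ ≤ 1 ∧ δ ≤ 1 ∧ γ ≤ 1 ∧
    8 * a * δ ≤ σ ∧
    γ * (σ + a) ≤ 4 * Real.sqrt (2 * a * b / R) ∧
    σ * δ ≤ (1 / 9) * Real.sqrt (2 * a * b / R) ∧
    b / 6 ≤ -(1 / 4) * (σ * δ) * Real.log σ ∧
    2 * (σ + a) ^ 2 / (b * γ) ≤ -(1 / 4) * (σ * δ) * Real.log σ := by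
  subst ha hσ hb hδ hγ
  -- positivity of R
  have hR0 : (0 : ℝ) < R := lt_of_lt_of_le (by positivity) hR
  set u : ℝ := 2 ^ ((1 : ℝ) / 5) with hu
  set v : ℝ := 3 ^ ((1 : ℝ) / 5) with hv
  set s : ℝ := R ^ ((1 : ℝ) / 5) with hs
  have hu0 : 0 < u := by rw [hu]; positivity
  have hv0 : 0 < v := by rw [hv]; positivity
  have hs0 : 0 < s := by rw [hs]; positivity
  have hu5 : u ^ 5 = 2 := by
    rw [hu, ← Real.rpow_natCast (2 ^ ((1:ℝ)/5)) 5, ← Real.rpow_mul (by norm_num)]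
    norm_num
  have hv5 : v ^ 5 = 3 := by
    rw [hv, ← Real.rpow_natCast (3 ^ ((1:ℝ)/5)) 5, ← Real.rpow_mul (by norm_num)]
    norm_num
  have hs5 : s ^ 5 = R := by
    rw [hs, ← Real.rpow_natCast (R ^ ((1:ℝ)/5)) 5, ← Real.rpow_mul hR0.le]
    norm_num
  -- rewrite all rpow's in the goal
  have hu8 : (2 : ℝ) ^ ((8 : ℝ) / 5) = u ^ 8 := by
    rw [hu, show ((8:ℝ)/5) = ((8:ℕ):ℝ)/5 by norm_num, rpow_div_five 2 (by norm_num)]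
  have hv8 : (3 : ℝ) ^ ((8 : ℝ) / 5) = v ^ 8 := by
    rw [hv, show ((8:ℝ)/5) = ((8:ℕ):ℝ)/5 by norm_num, rpow_div_five 3 (by norm_num)]
  have hs3 : R ^ ((3 : ℝ) / 5) = s ^ 3 := by
    rw [hs, show ((3:ℝ)/5) = ((3:ℕ):ℝ)/5 by norm_num, rpow_div_five R hR0.le]
  have hu7 : (2 : ℝ) ^ ((7 : ℝ) / 5) = u ^ 7 := by
    rw [hu, show ((7:ℝ)/5) = ((7:ℕ):ℝ)/5 by norm_num, rpow_div_five 2 (by norm_num)]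
  have hv6 : (3 : ℝ) ^ ((6 : ℝ) / 5) = v ^ 6 := by
    rw [hv, show ((6:ℝ)/5) = ((6:ℕ):ℝ)/5 by norm_num, rpow_div_five 3 (by norm_num)]
  have hu6 : (2 : ℝ) ^ ((6 : ℝ) / 5) = u ^ 6 := by
    rw [hu, show ((6:ℝ)/5) = ((6:ℕ):ℝ)/5 by norm_num, rpow_div_five 2 (by norm_num)]
  have hv7i : (3 : ℝ) ^ (-(7 : ℝ) / 5) = (v ^ 7)⁻¹ := by
    rw [show (-(7:ℝ)/5) = -((7:ℝ)/5) by norm_num, Real.rpow_neg (by norm_num), hv,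
      show ((7:ℝ)/5) = ((7:ℕ):ℝ)/5 by norm_num, rpow_div_five 3 (by norm_num)]
  have hs2i : R ^ (-(2 : ℝ) / 5) = (s ^ 2)⁻¹ := by
    rw [show (-(2:ℝ)/5) = -((2:ℝ)/5) by norm_num, Real.rpow_neg hR0.le, hs,
      show ((2:ℝ)/5) = ((2:ℕ):ℝ)/5 by norm_num, rpow_div_five R hR0.le]
  rw [hu8, hv8, hs3, hu7, hv6, hu6, hv7i, hs2i]
  set A : ℝ := Real.exp (-(u ^ 8 * v ^ 8 * s ^ 3)) with hA
  have hA0 : 0 < A := Real.exp_pos _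
  have hA1 : A ≤ 1 := by
    rw [hA, Real.exp_le_one_iff]
    nlinarith [mul_pos (mul_pos (pow_pos hu0 8) (pow_pos hv0 8)) (pow_pos hs0 3)]
  clear_value A
  clear_value u v s
  -- basic facts
  have hu1 : 1 ≤ u := by nlinarith [hu5, pow_pos hu0 4, pow_pos hu0 3, pow_pos hu0 2, hu0]
  have hv1 : 1 ≤ v := by nlinarith [hv5, pow_pos hv0 4, pow_pos hv0 3, pow_pos hv0 2, hv0]
  -- R ≥ 1
  have hp2 : ((2:ℝ) ^ ((21:ℝ)/2)) ^ 2 = 2097152 := by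
    rw [← Real.rpow_natCast ((2:ℝ) ^ ((21:ℝ)/2)) 2, ← Real.rpow_mul (by norm_num),
      show ((21:ℝ)/2 * ((2:ℕ):ℝ)) = ((21:ℕ):ℝ) by norm_num, Real.rpow_natCast]
    norm_num
  have hq2 : ((3:ℝ) ^ ((7:ℝ)/2)) ^ 2 = 2187 := by
    rw [← Real.rpow_natCast ((3:ℝ) ^ ((7:ℝ)/2)) 2, ← Real.rpow_mul (by norm_num),
      show ((7:ℝ)/2 * ((2:ℕ):ℝ)) = ((7:ℕ):ℝ) by norm_num, Real.rpow_natCast]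
    norm_num
  have hp0 : (0:ℝ) < (2:ℝ) ^ ((21:ℝ)/2) := by positivity
  have hq0 : (0:ℝ) < (3:ℝ) ^ ((7:ℝ)/2) := by positivity
  have hpq : (3:ℝ) ^ ((7:ℝ)/2) ≤ (2:ℝ) ^ ((21:ℝ)/2) := le_of_pow_le_pow_left₀ (n := 2) (by norm_num) hp0.le (by rw [hp2, hq2]; norm_num)
  have hR1 : (1:ℝ) ≤ R := by
    refine le_trans ?_ hR
    rw [show (-(7:ℝ)/2) = -((7:ℝ)/2) by norm_num, Real.rpow_neg (by norm_num),
      ← div_eq_mul_inv, le_div_iff₀ hq0, one_mul]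
    exact hpq
  have hs1 : 1 ≤ s := by
    have h := Real.rpow_le_rpow (by norm_num) hR1 (by norm_num : (0:ℝ) ≤ 1/5)
    rwa [Real.one_rpow, ← hs] at h
  -- the key inequality from hR
  have hs2 : u ^ 21 ≤ v ^ 7 * s ^ 2 := by
    have h := Real.rpow_le_rpow (by positivity) hR (by norm_num : (0:ℝ) ≤ 2/5)
    rw [Real.mul_rpow (by positivity) (by positivity),
      ← Real.rpow_mul (by norm_num : (0:ℝ) ≤ 2), ← Real.rpow_mul (by norm_num : (0:ℝ) ≤ 3)] at h
    rw [show (21:ℝ)/2 * (2/5) = ((21:ℕ):ℝ)/5 by norm_num,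
      show (-(7:ℝ)/2) * (2/5) = -(((7:ℕ):ℝ)/5) by norm_num,
      Real.rpow_neg (by norm_num : (0:ℝ) ≤ 3),
      rpow_div_five 2 (by norm_num), rpow_div_five 3 (by norm_num),
      show ((2:ℝ)/5) = ((2:ℕ):ℝ)/5 by norm_num, rpow_div_five R hR0.le,
      ← hu, ← hv, ← hs] at h
    rw [← div_eq_mul_inv, div_le_iff₀ (by positivity)] at h
    linarith
  -- algebraic consequences of u^5 = 2, v^5 = 3
  have h8u : u ^ 21 = 8 * u ^ 6 := by
    linear_combination (u ^ 16 + 2 * u ^ 11 + 4 * u ^ 6) * hu5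
  have hv10 : v ^ 3 * v ^ 7 = 9 := by linear_combination (v ^ 5 + 3) * hv5
  -- the sublayer condition 8δ ≤ 1
  have hkey : 8 * (u ^ 6 * (v ^ 7)⁻¹ * (s ^ 2)⁻¹) ≤ 1 := by
    have hrw : u ^ 6 * (v ^ 7)⁻¹ * (s ^ 2)⁻¹ = u ^ 6 / (v ^ 7 * s ^ 2) := by
      field_simp
    rw [hrw, mul_div_assoc', div_le_one (by positivity)]
    linarith
  have hδ0 : 0 ≤ u ^ 6 * (v ^ 7)⁻¹ * (s ^ 2)⁻¹ := by positivity
  -- b ≤ 1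
  have hEexp : u ^ 8 * v ^ 8 * s ^ 3 ≤ Real.exp (u ^ 8 * v ^ 8 * s ^ 3) := by
    have := Real.add_one_le_exp (u ^ 8 * v ^ 8 * s ^ 3); linarith
  have hexpA : Real.exp (u ^ 8 * v ^ 8 * s ^ 3) * A = 1 := by
    rw [hA, ← Real.exp_add]; simp
  have hb1 : u ^ 7 * v ^ 6 * s * A ≤ 1 := by
    have e1 : u ^ 7 ≤ u ^ 8 := pow_le_pow_right₀ hu1 (by norm_num)
    have e2 : v ^ 6 ≤ v ^ 8 := pow_le_pow_right₀ hv1 (by norm_num)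
    have e3 : s ≤ s ^ 3 := by
      calc s = s ^ 1 := (pow_one s).symm
        _ ≤ s ^ 3 := pow_le_pow_right₀ hs1 (by norm_num)
    have h1 : u ^ 7 * v ^ 6 ≤ u ^ 8 * v ^ 8 :=
      mul_le_mul e1 e2 (by positivity) (by positivity)
    have h2 : u ^ 7 * v ^ 6 * s ≤ u ^ 8 * v ^ 8 * s ^ 3 :=
      mul_le_mul h1 e3 hs0.le (by positivity)
    calc u ^ 7 * v ^ 6 * s * A ≤ (u ^ 8 * v ^ 8 * s ^ 3) * A :=
          mul_le_mul_of_nonneg_right h2 hA0.le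
      _ ≤ Real.exp (u ^ 8 * v ^ 8 * s ^ 3) * A :=
          mul_le_mul_of_nonneg_right hEexp hA0.le
      _ = 1 := hexpA
  -- the square root
  have hlog : Real.log A = -(u ^ 8 * v ^ 8 * s ^ 3) := by rw [hA, Real.log_exp]
  rw [← hs5, hlog]
  have hsq : Real.sqrt (2 * A * (u ^ 7 * v ^ 6 * s * A) / s ^ 5) = u ^ 6 * v ^ 3 * A / s ^ 2 := by
    rw [show 2 * A * (u ^ 7 * v ^ 6 * s * A) / s ^ 5 = (u ^ 6 * v ^ 3 * A / s ^ 2) ^ 2 from by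
      field_simp
      linear_combination (-1 : ℝ) * hu5]
    exact Real.sqrt_sq (by positivity)
  rw [hsq]
  refine ⟨hA1, hb1, hA1, by linarith, by linarith, ?_, ?_, ?_, ?_, ?_⟩
  · -- 8aδ ≤ σ
    have h := mul_le_mul_of_nonneg_left hkey hA0.le
    nlinarith [h]
  · -- γ(σ+a) ≤ 4√
    have h1 : u ^ 6 * (v ^ 7)⁻¹ * (s ^ 2)⁻¹ * (A + A) = 2 * u ^ 6 * A / (v ^ 7 * s ^ 2) := by
      field_simp; ring
    have h2 : 4 * (u ^ 6 * v ^ 3 * A / s ^ 2) = 4 * u ^ 6 * v ^ 3 * A / s ^ 2 := by ring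
    rw [h1, h2, div_le_div_iff₀ (by positivity) (by positivity)]
    have h3 : 4 * u ^ 6 * v ^ 3 * A * (v ^ 7 * s ^ 2) = 36 * (u ^ 6 * A * s ^ 2) := by
      linear_combination (4 * u ^ 6 * A * s ^ 2 * (v ^ 5 + 3)) * hv5
    have hX : (0:ℝ) ≤ u ^ 6 * A * s ^ 2 := by positivity
    linarith [h3, hX]
  · -- σδ ≤ (1/9)√
    refine le_of_eq ?_
    field_simp
    linear_combination (-(v ^ 5 + 3)) * hv5
  · -- b/6 ≤ RHS
    have e1 : u ^ 14 = 4 * u ^ 4 := by linear_combination (u ^ 9 + 2 * u ^ 4) * hu5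
    have e2 : u ^ 7 = 2 * u ^ 2 := by linear_combination u ^ 2 * hu5
    have e3 : v ^ 6 = 3 * v := by linear_combination v * hv5
    have hrhs : -(1/4) * (A * (u ^ 6 * (v ^ 7)⁻¹ * (s ^ 2)⁻¹)) * -(u ^ 8 * v ^ 8 * s ^ 3)
        = (1/4) * (u ^ 14 * v * s * A) := by
      field_simp
    rw [hrhs]
    have hu24 : u ^ 2 ≤ u ^ 4 := pow_le_pow_right₀ hu1 (by norm_num)
    calc u ^ 7 * v ^ 6 * s * A / 6 = u ^ 2 * v * s * A := by rw [e2, e3]; ring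
      _ ≤ u ^ 4 * v * s * A := by
          have h0 : (0:ℝ) ≤ v * s * A := by positivity
          have h := mul_le_mul_of_nonneg_right hu24 h0
          linarith [h]
      _ = (1/4) * (u ^ 14 * v * s * A) := by rw [e1]; ring
  · -- bound optimization
    have hrhs : -(1/4) * (A * (u ^ 6 * (v ^ 7)⁻¹ * (s ^ 2)⁻¹)) * -(u ^ 8 * v ^ 8 * s ^ 3)
        = (1/4) * (u ^ 14 * v * s * A) := by
      field_simp
    rw [hrhs]
    have hlhs : 2 * (A + A) ^ 2 / (u ^ 7 * v ^ 6 * s * A * (u ^ 6 * (v ^ 7)⁻¹ * (s ^ 2)⁻¹))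
        = 8 * A * v * s / u ^ 13 := by
      rw [div_eq_div_iff (by positivity) (by positivity)]
      field_simp
      ring
    rw [hlhs, div_le_iff₀ (by positivity)]
    have e27 : u ^ 27 = 32 * u ^ 2 := by
      linear_combination (u ^ 22 + 2 * u ^ 17 + 4 * u ^ 12 + 8 * u ^ 7 + 16 * u ^ 2) * hu5
    have hu2 : (1:ℝ) ≤ u ^ 2 := by
      have := mul_le_mul hu1 hu1 zero_le_one (zero_le_one.trans hu1)
      rw [pow_two]; linarith
    have hY : (0:ℝ) ≤ A * v * s := by positivity
    have e : (1/4) * (u ^ 14 * v * s * A) * u ^ 13 = 8 * (u ^ 2 * (A * v * s)) := by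
      linear_combination ((1/4) * v * s * A *
        (u ^ 22 + 2 * u ^ 17 + 4 * u ^ 12 + 8 * u ^ 7 + 16 * u ^ 2)) * hu5
    have h := mul_le_mul_of_nonneg_right hu2 hY
    linarith [e, h]
end

section
/- For R ≥ 2^(19/2)·3^(-3/2), the parameters a = σ = 2^(4/5)·3^(-3/5)·R^(-2/5)·exp(-2^(14/5)·3^(2/5)·R^(3/5)), b = 2^(12/5)·3^(1/5)·R^(-1/5)·exp(-2^(14/5)·3^(2/5)·R^(3/5)), δ = γ = 2^(4/5)·3^(-3/5)·R^(-2/5) satisfy: a, b, σ, δ, γ ≤ 1; 8aδ ≤ σ; (σ+a)γ ≤ 6√(ab/R); σδ ≤ (1/3)√(ab/R); b/6 ≤ -(1/8)σδ log(σ/δ); and 2(σ+a)²/(bγ) ≤ -(1/8)σδ log(σ/δ). -/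
set_option maxHeartbeats 1000000 in
/-- The IH3 parameter choices satisfy all the constraints of the proof. -/
theorem ih3_parameter_choices (R a b σ δ γ : ℝ)
    (hR : (2 : ℝ) ^ ((19 : ℝ) / 2) * (3 : ℝ) ^ (-(3 : ℝ) / 2) ≤ R)
    (ha : a = (2 : ℝ) ^ ((4 : ℝ) / 5) * (3 : ℝ) ^ (-(3 : ℝ) / 5) * R ^ (-(2 : ℝ) / 5) *
      Real.exp (-((2 : ℝ) ^ ((14 : ℝ) / 5) * (3 : ℝ) ^ ((2 : ℝ) / 5) * R ^ ((3 : ℝ) / 5))))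
    (hσ : σ = (2 : ℝ) ^ ((4 : ℝ) / 5) * (3 : ℝ) ^ (-(3 : ℝ) / 5) * R ^ (-(2 : ℝ) / 5) *
      Real.exp (-((2 : ℝ) ^ ((14 : ℝ) / 5) * (3 : ℝ) ^ ((2 : ℝ) / 5) * R ^ ((3 : ℝ) / 5))))
    (hb : b = (2 : ℝ) ^ ((12 : ℝ) / 5) * (3 : ℝ) ^ ((1 : ℝ) / 5) * R ^ (-(1 : ℝ) / 5) *
      Real.exp (-((2 : ℝ) ^ ((14 : ℝ) / 5) * (3 : ℝ) ^ ((2 : ℝ) / 5) * R ^ ((3 : ℝ) / 5))))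
    (hδ : δ = (2 : ℝ) ^ ((4 : ℝ) / 5) * (3 : ℝ) ^ (-(3 : ℝ) / 5) * R ^ (-(2 : ℝ) / 5))
    (hγ : γ = (2 : ℝ) ^ ((4 : ℝ) / 5) * (3 : ℝ) ^ (-(3 : ℝ) / 5) * R ^ (-(2 : ℝ) / 5)) :
    a ≤ 1 ∧ b ≤ 1 ∧ σ ≤ 1 ∧ δ ≤ 1 ∧ γ ≤ 1 ∧
    8 * a * δ ≤ σ ∧
    (σ + a) * γ ≤ 6 * Real.sqrt (a * b / R) ∧
    σ * δ ≤ (1 / 3) * Real.sqrt (a * b / R) ∧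
    b / 6 ≤ -(1 / 8) * (σ * δ) * Real.log (σ / δ) ∧
    2 * (σ + a) ^ 2 / (b * γ) ≤ -(1 / 8) * (σ * δ) * Real.log (σ / δ) := by
  have h2 : (0:ℝ) ≤ 2 := by norm_num
  have h3 : (0:ℝ) ≤ 3 := by norm_num
  have hRpos : (0:ℝ) < R := lt_of_lt_of_le (by positivity) hR
  obtain ⟨v, hvdef⟩ : ∃ t : ℝ, (2:ℝ) ^ ((1:ℝ)/5) = t := ⟨_, rfl⟩
  obtain ⟨w, hwdef⟩ : ∃ t : ℝ, (3:ℝ) ^ ((1:ℝ)/5) = t := ⟨_, rfl⟩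
  obtain ⟨u, hudef⟩ : ∃ t : ℝ, R ^ ((1:ℝ)/5) = t := ⟨_, rfl⟩
  have hvpos : 0 < v := hvdef ▸ Real.rpow_pos_of_pos (by norm_num) _
  have hwpos : 0 < w := hwdef ▸ Real.rpow_pos_of_pos (by norm_num) _
  have hupos : 0 < u := hudef ▸ Real.rpow_pos_of_pos hRpos _
  have hv5 : v ^ 5 = 2 := by
    rw [← hvdef, ← Real.rpow_natCast ((2:ℝ) ^ ((1:ℝ)/5)) 5, ← Real.rpow_mul h2]; norm_num
  have hw5 : w ^ 5 = 3 := by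
    rw [← hwdef, ← Real.rpow_natCast ((3:ℝ) ^ ((1:ℝ)/5)) 5, ← Real.rpow_mul h3]; norm_num
  have hu5 : u ^ 5 = R := by
    rw [← hudef, ← Real.rpow_natCast (R ^ ((1:ℝ)/5)) 5, ← Real.rpow_mul hRpos.le]; norm_num
  -- conversion of the rpow expressions
  have e245 : (2:ℝ) ^ ((4:ℝ)/5) = v ^ 4 := by
    rw [← hvdef, ← Real.rpow_natCast ((2:ℝ) ^ ((1:ℝ)/5)) 4, ← Real.rpow_mul h2]; norm_num
  have e2125 : (2:ℝ) ^ ((12:ℝ)/5) = v ^ 12 := by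
    rw [← hvdef, ← Real.rpow_natCast ((2:ℝ) ^ ((1:ℝ)/5)) 12, ← Real.rpow_mul h2]; norm_num
  have e2145 : (2:ℝ) ^ ((14:ℝ)/5) = v ^ 14 := by
    rw [← hvdef, ← Real.rpow_natCast ((2:ℝ) ^ ((1:ℝ)/5)) 14, ← Real.rpow_mul h2]; norm_num
  have e3m35 : (3:ℝ) ^ (-(3:ℝ)/5) = (w ^ 3)⁻¹ := by
    rw [show (-(3:ℝ)/5) = -(3/5) by ring, Real.rpow_neg h3, ← hwdef,
      ← Real.rpow_natCast ((3:ℝ) ^ ((1:ℝ)/5)) 3, ← Real.rpow_mul h3]; norm_num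
  have e325 : (3:ℝ) ^ ((2:ℝ)/5) = w ^ 2 := by
    rw [← hwdef, ← Real.rpow_natCast ((3:ℝ) ^ ((1:ℝ)/5)) 2, ← Real.rpow_mul h3]; norm_num
  have eRm25 : R ^ (-(2:ℝ)/5) = (u ^ 2)⁻¹ := by
    rw [show (-(2:ℝ)/5) = -(2/5) by ring, Real.rpow_neg hRpos.le, ← hudef,
      ← Real.rpow_natCast (R ^ ((1:ℝ)/5)) 2, ← Real.rpow_mul hRpos.le]; norm_num
  have eRm15 : R ^ (-(1:ℝ)/5) = u⁻¹ := by
    rw [show (-(1:ℝ)/5) = -(1/5) by ring, Real.rpow_neg hRpos.le, hudef]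
  have eR35 : R ^ ((3:ℝ)/5) = u ^ 3 := by
    rw [← hudef, ← Real.rpow_natCast (R ^ ((1:ℝ)/5)) 3, ← Real.rpow_mul hRpos.le]; norm_num
  obtain ⟨K, hKdef⟩ : ∃ t : ℝ, v ^ 14 * w ^ 2 * u ^ 3 = t := ⟨_, rfl⟩
  obtain ⟨E, hEdef⟩ : ∃ t : ℝ, Real.exp (-K) = t := ⟨_, rfl⟩
  have hEpos : 0 < E := hEdef ▸ Real.exp_pos _
  obtain ⟨x, hxdef⟩ : ∃ t : ℝ, v ^ 4 / (w ^ 3 * u ^ 2) = t := ⟨_, rfl⟩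
  obtain ⟨y, hydef⟩ : ∃ t : ℝ, v ^ 12 * w / u = t := ⟨_, rfl⟩
  have hxpos : 0 < x := by rw [← hxdef]; positivity
  have hypos : 0 < y := by rw [← hydef]; positivity
  have hKpos : 0 < K := by rw [← hKdef]; positivity
  have ha' : a = x * E := by
    rw [ha, e245, e3m35, eRm25, e2145, e325, eR35, hKdef, hEdef, ← hxdef]; ring
  have hσ' : σ = x * E := by
    rw [hσ, e245, e3m35, eRm25, e2145, e325, eR35, hKdef, hEdef, ← hxdef]; ring
  have hb' : b = y * E := by
    rw [hb, e2125, hwdef, eRm15, e2145, e325, eR35, hKdef, hEdef, ← hydef]; ring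
  have hδ' : δ = x := by rw [hδ, e245, e3m35, eRm25, ← hxdef]; ring
  have hγ' : γ = x := by rw [hγ, e245, e3m35, eRm25, ← hxdef]; ring
  -- basic bounds from hR
  have hR0sq : ((2:ℝ)^((19:ℝ)/2) * 3^(-(3:ℝ)/2))^2 = 524288 / 27 := by
    rw [mul_pow, ← Real.rpow_natCast ((2:ℝ)^((19:ℝ)/2)) 2, ← Real.rpow_mul h2,
        ← Real.rpow_natCast ((3:ℝ)^(-(3:ℝ)/2)) 2, ← Real.rpow_mul h3]
    norm_num
  have hR2 : (524288:ℝ) / 27 ≤ R^2 := by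
    rw [← hR0sq]; exact pow_le_pow_left₀ (by positivity) hR 2
  have hR2' : (1024:ℝ) ≤ R^2 := by linarith
  have hR32 : (32:ℝ) ≤ R := by clear * - hR2' hRpos; nlinarith [hR2', hRpos]
  have hu2 : (2:ℝ) ≤ u := by
    apply le_of_pow_le_pow_left₀ (by norm_num : (5:ℕ) ≠ 0) hupos.le
    rw [hu5]; clear * - hR32; linarith
  have hv1 : (1:ℝ) ≤ v := by
    apply le_of_pow_le_pow_left₀ (by norm_num : (5:ℕ) ≠ 0) hvpos.le
    rw [hv5]; norm_num
  have hw1 : (1:ℝ) ≤ w := by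
    apply le_of_pow_le_pow_left₀ (by norm_num : (5:ℕ) ≠ 0) hwpos.le
    rw [hw5]; norm_num
  have hx8 : x ≤ 1/8 := by
    rw [← hxdef, div_le_iff₀ (by positivity)]
    have h5 : (8 * v^4)^5 ≤ (w^3 * u^2)^5 := by
      have e1 : (8 * v^4)^5 = 32768 * (v^5)^4 := by ring
      have e2' : (w^3 * u^2)^5 = (w^5)^3 * (u^5)^2 := by ring
      rw [e1, hv5, e2', hw5, hu5]
      norm_num
      clear * - hR2; linarith
    have h5' := le_of_pow_le_pow_left₀ (by norm_num : (5:ℕ) ≠ 0) (by positivity : (0:ℝ) ≤ w^3*u^2) h5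
    clear * - h5'; linarith
  have hK8 : (8:ℝ) ≤ K := by
    have hv14 : (1:ℝ) ≤ v^14 := by
      have := pow_le_pow_left₀ (by norm_num : (0:ℝ) ≤ 1) hv1 14; simpa using this
    have hw2 : (1:ℝ) ≤ w^2 := by
      have := pow_le_pow_left₀ (by norm_num : (0:ℝ) ≤ 1) hw1 2; simpa using this
    have hu3 : (8:ℝ) ≤ u^3 := by
      have := pow_le_pow_left₀ (by norm_num : (0:ℝ) ≤ 2) hu2 3; clear * - this; norm_num at this; linarith
    have s1 : u^3 ≤ w^2 * u^3 := le_mul_of_one_le_left (by positivity) hw2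
    have s2 : w^2 * u^3 ≤ v^14 * (w^2 * u^3) := le_mul_of_one_le_left (by positivity) hv14
    rw [← hKdef]; clear * - s1 s2 hu3; nlinarith [s1, s2, hu3]
  have hE16 : E ≤ 1/16 := by
    have h1 : E ≤ Real.exp (-8) := by
      rw [← hEdef]; exact Real.exp_le_exp.2 (by linarith)
    have h2' : Real.exp (-8:ℝ) ≤ 1/16 := by
      have e8 : Real.exp (8:ℝ) = Real.exp 1 ^ (8:ℕ) := by
        rw [← Real.exp_nat_mul]; norm_num
      have h28 : (2:ℝ)^(8:ℕ) ≤ Real.exp 1 ^ (8:ℕ) :=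
        pow_le_pow_left₀ (by norm_num) (by linarith [Real.add_one_le_exp (1:ℝ)]) 8
      have h16 : (16:ℝ) ≤ Real.exp 8 := by rw [e8]; norm_num at h28; linarith
      rw [Real.exp_neg]
      have := inv_anti₀ (by norm_num : (0:ℝ) < 16) h16
      clear * - this; norm_num at this ⊢; linarith
    linarith
  have hE1 : E ≤ 1 := le_trans hE16 (by norm_num)
  have hy16 : y ≤ 16 := by
    have hv12 : v^12 ≤ 8 := by
      apply le_of_pow_le_pow_left₀ (by norm_num : (5:ℕ) ≠ 0) (by norm_num)
      have e1 : (v^12)^5 = (v^5)^12 := by ring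
      rw [e1, hv5]; norm_num
    have hw2' : w ≤ 2 := by
      apply le_of_pow_le_pow_left₀ (by norm_num : (5:ℕ) ≠ 0) (by norm_num)
      rw [hw5]; norm_num
    have h1 : y ≤ v^12 * w := by
      rw [← hydef]
      apply div_le_self (by positivity) (by linarith)
    have s1 : v^12 * w ≤ 8 * w := mul_le_mul_of_nonneg_right hv12 hwpos.le
    clear * - s1 h1 hw2'; linarith
  -- sqrt identity
  have hw10 : w^10 = 9 := by
    have e1 : w^10 = (w^5)^2 := by ring
    rw [e1, hw5]; norm_num
  have habR : a * b / R = (3 * x^2 * E)^2 := by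
    rw [ha', hb', ← hu5, ← hxdef, ← hydef]
    field_simp
    ring_nf
    linear_combination hw10
  have hsqrt : Real.sqrt (a*b/R) = 3*x^2*E := by
    rw [habR, Real.sqrt_sq (by positivity)]
  have hσδ : σ / δ = E := by
    rw [hσ', hδ']; field_simp
  have hlog : Real.log (σ/δ) = -K := by
    rw [hσδ, ← hEdef, Real.log_exp]
  have hv10 : v^10 = 4 := by
    have e1 : v^10 = (v^5)^2 := by ring
    rw [e1, hv5]; norm_num
  have hv30 : v^30 = 64 := by
    have e1 : v^30 = (v^5)^6 := by ring
    rw [e1, hv5]; norm_num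
  have h4y : 4 * y = 3 * (x^2 * K) := by
    rw [← hydef, ← hxdef, ← hKdef]
    field_simp
    ring_nf
    linear_combination 4 * hw5 - 3 * hv10
  have hxyK : x * y * K = 64 := by
    rw [← hydef, ← hxdef, ← hKdef]
    field_simp
    ring_nf
    linear_combination hv30
  refine ⟨?_, ?_, ?_, ?_, ?_, ?_, ?_, ?_, ?_, ?_⟩
  · rw [ha']; clear * - hx8 hE1 hEpos hxpos; nlinarith
  · rw [hb']; clear * - hy16 hE16 hEpos hypos; nlinarith
  · rw [hσ']; clear * - hx8 hE1 hEpos hxpos; nlinarith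
  · rw [hδ']; clear * - hx8; linarith
  · rw [hγ']; clear * - hx8; linarith
  · rw [ha', hδ', hσ']
    clear * - hx8 hEpos hxpos
    nlinarith [mul_nonneg (mul_nonneg hEpos.le hxpos.le) (by linarith : (0:ℝ) ≤ 1 - 8*x)]
  · rw [hsqrt, hσ', ha', hγ']
    clear * - hEpos hxpos
    nlinarith [mul_nonneg (mul_nonneg hxpos.le hxpos.le) hEpos.le]
  · rw [hsqrt, hσ', hδ']
    have e1 : x * E * x = 1/3 * (3*x^2*E) := by ring
    clear * - e1; linarith
  · rw [hlog, hb', hσ', hδ']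
    have e1 : y*E/6 = -(1/8) * (x*E*x) * (-K) := by linear_combination (E/24) * h4y
    clear * - e1; linarith
  · rw [hlog, hσ', ha', hb', hγ', hδ']
    have e1 : 2*(x*E + x*E)^2/((y*E)*x) = -(1/8) * ((x*E)*x) * (-K) := by
      rw [div_eq_iff (by positivity)]
      linear_combination (-(x^2 * E^2) / 8) * hxyK
    exact le_of_eq e1
end
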